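/- Let Γ₀ be symmetric positive semidefinite, λ ≥ 0, and v ∈ ℝ^N. Then 0 ≤ vᵀ(Γ₀+λI)^{−1}(Γ₀+2λI)(Γ₀+λI)^{−1} v ≤ Var(y) whenever v = Cov(y, x) for a square-integrable random variable y and random vector x with covariance Γ₀. Consequently the memory capacity C_H = vᵀ(Γ₀+λI)^{−1}(Γ₀+2λI)(Γ₀+λI)^{−1} v / Var(y) satisfies 0 ≤ C_H ≤ 1. -/

import Mathlib

open Matrix MeasureTheory ProbabilityTheory

lemma mem2_integrable_mul {Ω : Type*} [MeasureSpace Ω] {f g : Ω → ℝ}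
    (hf : MemLp f 2 ℙ) (hg : MemLp g 2 ℙ) :
    Integrable (fun ω => f ω * g ω) ℙ := by
  have h : (fun ω => f ω * g ω)
      = fun ω => (((f ω + g ω)^2 - f ω^2) - g ω^2) / 2 := by
    funext ω; ring
  rw [h]
  have h1 : Integrable (fun ω => (f ω + g ω)^2) ℙ := by
    simpa using (hf.add hg).integrable_sq
  exact ((h1.sub hf.integrable_sq).sub hg.integrable_sq).div_const 2

lemma key_ineq {Ω : Type*} [MeasureSpace Ω]
    [IsProbabilityMeasure (ℙ : Measure Ω)] (N : ℕ)
    (y : Ω → ℝ) (x : Fin N → Ω → ℝ)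
    (hy : MemLp y 2 ℙ) (hx : ∀ i, MemLp (x i) 2 ℙ)
    (Γ₀ : Matrix (Fin N) (Fin N) ℝ)
    (hΓ : ∀ i j, Γ₀ i j =
      ∫ ω, (x i ω - ∫ ω', x i ω' ∂ℙ) * (x j ω - ∫ ω', x j ω' ∂ℙ) ∂ℙ)
    (v : Fin N → ℝ)
    (hv : ∀ i, v i = ∫ ω, (y ω - ∫ ω', y ω' ∂ℙ) * (x i ω - ∫ ω', x i ω' ∂ℙ) ∂ℙ)
    (w : Fin N → ℝ) :
    2 * (w ⬝ᵥ v) - w ⬝ᵥ Γ₀.mulVec w ≤ variance y ℙ := by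
  set xc : Fin N → Ω → ℝ := fun i ω => x i ω - ∫ ω', x i ω' ∂ℙ with hxcdef
  set yc : Ω → ℝ := fun ω => y ω - ∫ ω', y ω' ∂ℙ with hycdef
  have hxc : ∀ i, MemLp (xc i) 2 ℙ := fun i => (hx i).sub (memLp_const _)
  have hyc : MemLp yc 2 ℙ := hy.sub (memLp_const _)
  have hIxx : ∀ i j, Integrable (fun ω => xc i ω * xc j ω) ℙ :=
    fun i j => mem2_integrable_mul (hxc i) (hxc j)
  have hIxy : ∀ i, Integrable (fun ω => xc i ω * yc ω) ℙ :=
    fun i => mem2_integrable_mul (hxc i) hyc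
  have hIyy : Integrable (fun ω => yc ω ^ 2) ℙ := hyc.integrable_sq
  have expand : ∀ ω, (∑ i, w i * xc i ω - yc ω)^2 =
      ((∑ i, ∑ j, w i * w j * (xc i ω * xc j ω))
        - 2 * (∑ i, w i * (xc i ω * yc ω))) + yc ω ^ 2 := by
    intro ω
    have h1 : (∑ i, w i * xc i ω)^2
        = ∑ i, ∑ j, w i * w j * (xc i ω * xc j ω) := by
      rw [pow_two, Finset.sum_mul_sum]
      exact Finset.sum_congr rfl fun i _ => Finset.sum_congr rfl fun j _ => by ring
    have h2 : (∑ i, w i * xc i ω) * yc ω = ∑ i, w i * (xc i ω * yc ω) := by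
      rw [Finset.sum_mul]
      exact Finset.sum_congr rfl fun i _ => by ring
    rw [sub_sq, h1, mul_assoc, h2]
  have I1 : ∀ i, Integrable (fun ω => ∑ j, w i * w j * (xc i ω * xc j ω)) ℙ :=
    fun i => integrable_finset_sum _ fun j _ => (hIxx i j).const_mul _
  have I2 : Integrable (fun ω => ∑ i, w i * (xc i ω * yc ω)) ℙ :=
    integrable_finset_sum _ fun i _ => (hIxy i).const_mul _
  have hint : ∫ ω, (∑ i, w i * xc i ω - yc ω)^2 ∂ℙ =
      (w ⬝ᵥ Γ₀.mulVec w - 2 * (w ⬝ᵥ v)) + variance y ℙ := by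
    simp_rw [expand]
    have Ia : Integrable (fun ω => ∑ i, ∑ j, w i * w j * (xc i ω * xc j ω)) ℙ :=
      integrable_finset_sum _ fun i _ => I1 i
    have Ib : Integrable (fun ω => 2 * ∑ i, w i * (xc i ω * yc ω)) ℙ := I2.const_mul 2
    have Iab : Integrable (fun ω => (∑ i, ∑ j, w i * w j * (xc i ω * xc j ω))
        - 2 * ∑ i, w i * (xc i ω * yc ω)) ℙ := Ia.sub Ib
    rw [integral_add Iab hIyy, integral_sub Ia Ib,
        integral_finset_sum _ (fun i _ => I1 i), integral_const_mul,
        integral_finset_sum _ (fun i _ => (hIxy i).const_mul _)]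
    congr 1
    congr 1
    · simp_rw [integral_finset_sum _ (fun j (_ : j ∈ Finset.univ) => (hIxx _ j).const_mul _),
        integral_const_mul, dotProduct, mulVec, dotProduct, Finset.mul_sum]
      refine Finset.sum_congr rfl fun i _ => Finset.sum_congr rfl fun j _ => ?_
      rw [← hΓ i j]; ring
    · congr 1
      simp_rw [integral_const_mul, dotProduct]
      refine Finset.sum_congr rfl fun i _ => ?_
      rw [hv i]
      congr 1
      exact integral_congr_ae (Filter.Eventually.of_forall fun ω => mul_comm _ _)
    · rw [variance_eq_integral hy.aemeasurable]
  have hnn : 0 ≤ ∫ ω, (∑ i, w i * xc i ω - yc ω)^2 ∂ℙ :=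
    integral_nonneg fun ω => sq_nonneg _
  linarith [hint ▸ hnn]

/-- Boundedness of the memory capacity: if `Γ₀` is the (positive semidefinite) covariance
matrix of a square-integrable random vector `x`, `v = Cov(y, x)` for a square-integrable
random variable `y`, and `λ ≥ 0`, then the quadratic form
`vᵀ(Γ₀+λI)⁻¹(Γ₀+2λI)(Γ₀+λI)⁻¹ v` lies in `[0, Var(y)]`, and consequently the memory
capacity `C_H = vᵀ(Γ₀+λI)⁻¹(Γ₀+2λI)(Γ₀+λI)⁻¹ v / Var(y)` satisfies `0 ≤ C_H ≤ 1`. -/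
theorem memory_capacity_bounds {Ω : Type*} [MeasureSpace Ω]
    [IsProbabilityMeasure (ℙ : Measure Ω)] (N : ℕ)
    (y : Ω → ℝ) (x : Fin N → Ω → ℝ)
    (hy : MemLp y 2 ℙ) (hx : ∀ i, MemLp (x i) 2 ℙ)
    (Γ₀ : Matrix (Fin N) (Fin N) ℝ) (hΓpsd : Γ₀.PosSemidef)
    (hΓ : ∀ i j, Γ₀ i j =
      ∫ ω, (x i ω - ∫ ω', x i ω' ∂ℙ) * (x j ω - ∫ ω', x j ω' ∂ℙ) ∂ℙ)
    (v : Fin N → ℝ)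
    (hv : ∀ i, v i = ∫ ω, (y ω - ∫ ω', y ω' ∂ℙ) * (x i ω - ∫ ω', x i ω' ∂ℙ) ∂ℙ)
    (l : ℝ) (hl : 0 ≤ l) :
    (0 ≤ v ⬝ᵥ ((Γ₀ + l • (1 : Matrix (Fin N) (Fin N) ℝ))⁻¹ *
          (Γ₀ + (2 * l) • (1 : Matrix (Fin N) (Fin N) ℝ)) *
          (Γ₀ + l • (1 : Matrix (Fin N) (Fin N) ℝ))⁻¹).mulVec v ∧
      v ⬝ᵥ ((Γ₀ + l • (1 : Matrix (Fin N) (Fin N) ℝ))⁻¹ *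
          (Γ₀ + (2 * l) • (1 : Matrix (Fin N) (Fin N) ℝ)) *
          (Γ₀ + l • (1 : Matrix (Fin N) (Fin N) ℝ))⁻¹).mulVec v ≤ variance y ℙ) ∧
      (0 ≤ (v ⬝ᵥ ((Γ₀ + l • (1 : Matrix (Fin N) (Fin N) ℝ))⁻¹ *
            (Γ₀ + (2 * l) • (1 : Matrix (Fin N) (Fin N) ℝ)) *
            (Γ₀ + l • (1 : Matrix (Fin N) (Fin N) ℝ))⁻¹).mulVec v) / variance y ℙ ∧
        (v ⬝ᵥ ((Γ₀ + l • (1 : Matrix (Fin N) (Fin N) ℝ))⁻¹ *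
            (Γ₀ + (2 * l) • (1 : Matrix (Fin N) (Fin N) ℝ)) *
            (Γ₀ + l • (1 : Matrix (Fin N) (Fin N) ℝ))⁻¹).mulVec v) / variance y ℙ ≤ 1) := by
  set A : Matrix (Fin N) (Fin N) ℝ := Γ₀ + l • 1 with hAdef
  set B : Matrix (Fin N) (Fin N) ℝ := Γ₀ + (2 * l) • 1 with hBdef
  set Q : ℝ := v ⬝ᵥ (A⁻¹ * B * A⁻¹).mulVec v with hQdef
  have hmain : 0 ≤ Q ∧ Q ≤ variance y ℙ := by
    by_cases hA : IsUnit A.det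
    · -- invertible case
      set w : Fin N → ℝ := A⁻¹.mulVec v with hwdef
      have hΓsymm : Γ₀ᵀ = Γ₀ := by
        ext i j
        rw [Matrix.transpose_apply, hΓ j i, hΓ i j]
        simp_rw [mul_comm]
      have hAsymm : Aᵀ = A := by
        rw [hAdef, Matrix.transpose_add, hΓsymm, Matrix.transpose_smul, Matrix.transpose_one]
      have hAinvsymm : (A⁻¹)ᵀ = A⁻¹ := by
        rw [Matrix.transpose_nonsing_inv, hAsymm]
      have hQw : Q = w ⬝ᵥ B.mulVec w := by
        rw [hQdef, ← Matrix.mulVec_mulVec, ← Matrix.mulVec_mulVec,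
          Matrix.dotProduct_mulVec v A⁻¹, ← Matrix.mulVec_transpose, hAinvsymm]
      have hvAw : A.mulVec w = v := by
        rw [hwdef, Matrix.mulVec_mulVec, Matrix.mul_nonsing_inv _ hA, Matrix.one_mulVec]
      have hww : (0:ℝ) ≤ w ⬝ᵥ w := Finset.sum_nonneg fun i _ => mul_self_nonneg _
      have hwΓw : (0:ℝ) ≤ w ⬝ᵥ Γ₀.mulVec w := by
        have := hΓpsd.dotProduct_mulVec_nonneg w
        simpa using this
      have hwv : w ⬝ᵥ v = w ⬝ᵥ Γ₀.mulVec w + l * (w ⬝ᵥ w) := by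
        rw [← hvAw, hAdef, Matrix.add_mulVec, Matrix.smul_mulVec, Matrix.one_mulVec,
          dotProduct_add, dotProduct_smul, smul_eq_mul]
      have hQexp : Q = w ⬝ᵥ Γ₀.mulVec w + 2 * l * (w ⬝ᵥ w) := by
        rw [hQw, hBdef, Matrix.add_mulVec, Matrix.smul_mulVec, Matrix.one_mulVec,
          dotProduct_add, dotProduct_smul, smul_eq_mul]
      constructor
      · rw [hQexp]; positivity
      · have hk := key_ineq N y x hy hx Γ₀ hΓ v hv w
        linarith
    · -- singular case: A⁻¹ = 0
      rw [hQdef, Matrix.nonsing_inv_apply_not_isUnit _ hA]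
      simp [variance_nonneg]
  obtain ⟨h0, h1⟩ := hmain
  refine ⟨⟨h0, h1⟩, div_nonneg h0 (variance_nonneg _ _), ?_⟩
  rcases (variance_nonneg y ℙ).eq_or_lt with hvar | hvar
  · have hQ0 : Q = 0 := le_antisymm (by rw [← hvar] at h1; exact h1) h0
    rw [hQ0]; simp
  · exact (div_le_one hvar).mpr h1
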